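/- Let M be a retractable left R-module whose endomorphism ring End_R(M) is semisimple artinian. Then M is a semisimple artinian R-module (a finite direct sum of simple modules). -/

import Mathlib

/-- A left `R`-module `M` is retractable if `Hom_R(M, N) ≠ 0` for every nonzero
submodule `N` of `M`. -/
def IsRetractable (R M : Type*) [Ring R] [AddCommGroup M] [Module R M] : Prop :=
  ∀ N : Submodule R M, N ≠ ⊥ → ∃ f : M →ₗ[R] M, f ≠ 0 ∧ LinearMap.range f ≤ N

/-- A semisimple ring is von Neumann regular. -/
lemma vnr_of_semisimple {A : Type*} [Ring A] [IsSemisimpleRing A] (a : A) :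
    ∃ x : A, a * x * a = a := by
  obtain ⟨e, he, hspan⟩ := IsSemisimpleRing.ideal_eq_span_idempotent (Ideal.span {a})
  have ha : a ∈ Ideal.span ({e} : Set A) := hspan ▸ Submodule.mem_span_singleton_self a
  have heA : e ∈ Ideal.span ({a} : Set A) := hspan ▸ Submodule.mem_span_singleton_self e
  obtain ⟨r, hr⟩ := Submodule.mem_span_singleton.mp ha
  obtain ⟨s, hs⟩ := Submodule.mem_span_singleton.mp heA
  rw [smul_eq_mul] at hr hs
  refine ⟨s, ?_⟩
  have hae : a * e = a := by
    rw [← hr, mul_assoc, he.eq]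
  rw [mul_assoc, hs, hae]

/-- The left ideal of endomorphisms killing a submodule. -/
def killIdeal {R M : Type*} [Ring R] [AddCommGroup M] [Module R M]
    (N : Submodule R M) : Ideal (Module.End R M) where
  carrier := {f | N ≤ LinearMap.ker f}
  zero_mem' := by simp
  add_mem' := by
    intro f g hf hg x hx
    simp only [LinearMap.mem_ker, LinearMap.add_apply]
    rw [LinearMap.mem_ker.mp (hf hx), LinearMap.mem_ker.mp (hg hx), add_zero]
  smul_mem' := by
    intro c f hf x hx
    simp only [LinearMap.mem_ker, smul_eq_mul, Module.End.mul_apply]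
    rw [LinearMap.mem_ker.mp (hf hx), map_zero]

lemma key_idempotent {R M : Type*} [Ring R] [AddCommGroup M] [Module R M]
    (hr : IsRetractable R M) (hE : IsSemisimpleRing (Module.End R M))
    (N : Submodule R M) :
    ∃ e : Module.End R M, IsIdempotentElem e ∧ LinearMap.range e ≤ N ∧
      N ⊓ LinearMap.ker e = ⊥ := by
  haveI := hE
  set E := Module.End R M
  set S : Set (Ideal E) :=
    {J | ∃ e : E, IsIdempotentElem e ∧ LinearMap.range e ≤ N ∧ J = Ideal.span {e}} with hS
  have hSne : S.Nonempty :=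
    ⟨Ideal.span {0}, 0, IsIdempotentElem.zero,
      by rw [LinearMap.range_zero]; exact bot_le, rfl⟩
  obtain ⟨J, hJS, hJmax⟩ :=
    (isNoetherian_iff.mp (inferInstance : IsNoetherian E E)).has_min S hSne
  obtain ⟨e, hee, heN, rfl⟩ := hJS
  refine ⟨e, hee, heN, ?_⟩
  by_contra hK
  obtain ⟨f, hf0, hfK⟩ := hr (N ⊓ LinearMap.ker e) hK
  obtain ⟨x, hx⟩ := vnr_of_semisimple f
  obtain ⟨v, hv⟩ : ∃ v : E, v = f * x := ⟨_, rfl⟩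
  have hvf : v * f = f := by rw [hv, hx]
  have hvv : IsIdempotentElem v := by
    show v * v = v
    conv_lhs => rw [hv]
    rw [← mul_assoc, hx, hv]
  have hv0 : v ≠ 0 := fun h => hf0 (by rw [← hvf, h, zero_mul])
  have hvrange : LinearMap.range v ≤ N ⊓ LinearMap.ker e := by
    refine le_trans ?_ hfK
    rw [hv, Module.End.mul_eq_comp]
    exact LinearMap.range_comp_le_range _ _
  have hvN : LinearMap.range v ≤ N := le_trans hvrange inf_le_left
  have hvker : LinearMap.range v ≤ LinearMap.ker e := le_trans hvrange inf_le_right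
  have hev : e * v = 0 := by
    ext m
    have : v m ∈ LinearMap.ker e := hvker ⟨m, rfl⟩
    exact this
  clear hv hvf hx
  obtain ⟨w, hw⟩ : ∃ w : E, w = e + v - v * e := ⟨_, rfl⟩
  have hew : e * w = e := by
    rw [hw, mul_sub, mul_add, hee.eq, ← mul_assoc, hev, zero_mul, add_zero, sub_zero]
  have hvw : v * w = v := by
    rw [hw, mul_sub, mul_add, hvv.eq, ← mul_assoc, hvv.eq]
    abel
  have hvew : (v * e) * w = v * e := by
    rw [mul_assoc, hew]
  have hww : IsIdempotentElem w := by
    show w * w = w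
    nth_rewrite 1 [hw]
    rw [sub_mul, add_mul, hew, hvw, hvew, ← hw]
  have hwN : LinearMap.range w ≤ N := by
    rintro _ ⟨m, rfl⟩
    have h1 : e m ∈ N := heN ⟨m, rfl⟩
    have h2 : v m ∈ N := hvN ⟨m, rfl⟩
    have h3 : v (e m) ∈ N := hvN ⟨e m, rfl⟩
    have : w m = e m + v m - v (e m) := by
      rw [hw]; rfl
    rw [this]
    exact sub_mem (add_mem h1 h2) h3
  have hwe : w * e = e := by
    rw [hw, sub_mul, add_mul, hee.eq, mul_assoc, hee.eq]
    abel
  have hle : Ideal.span ({e} : Set E) ≤ Ideal.span ({w} : Set E) := by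
    rw [Ideal.span_le, Set.singleton_subset_iff]
    exact Submodule.mem_span_singleton.mpr ⟨e, by rw [smul_eq_mul, hew]⟩
  have hnle : Ideal.span ({e} : Set E) ≠ Ideal.span ({w} : Set E) := by
    intro h
    have hwmem : w ∈ Ideal.span ({e} : Set E) := h ▸ Submodule.mem_span_singleton_self w
    obtain ⟨g, hg⟩ := Submodule.mem_span_singleton.mp hwmem
    rw [smul_eq_mul] at hg
    have hwe' : w = e := by
      have : w * e = w := by rw [← hg, mul_assoc, hee.eq]
      rw [← this, hwe]
    have hveq : v = v * e := by rw [← hwe', hvw]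
    obtain ⟨n, hn⟩ : ∃ n, v n ≠ 0 := by
      by_contra h'
      push_neg at h'
      exact hv0 (LinearMap.ext fun n => (h' n).trans (LinearMap.zero_apply n).symm)
    have hvnker : v n ∈ LinearMap.ker e := hvker ⟨n, rfl⟩
    have hz : v (v n) = 0 := by
      rw [DFunLike.congr_fun hveq (v n)]
      show v (e (v n)) = 0
      rw [LinearMap.mem_ker.mp hvnker, map_zero]
    have hvvn : v (v n) = v n := by rw [← Module.End.mul_apply, hvv.eq]
    rw [hvvn] at hz
    exact hn hz
  exact hJmax (Ideal.span {w}) ⟨w, hww, hwN, rfl⟩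
    (lt_of_le_of_ne hle hnle)

/-- A retractable left `R`-module whose endomorphism ring is
semisimple artinian is a semisimple artinian module (a finite direct sum of simple
modules). -/
theorem retractable_with_semisimple_endomorphism_ring
    {R M : Type*} [Ring R] [AddCommGroup M] [Module R M]
    (hr : IsRetractable R M) (hE : IsSemisimpleRing (Module.End R M)) :
    IsSemisimpleModule R M ∧ IsArtinian R M := by
  haveI := hE
  have hcompl : ∀ N : Submodule R M, ∃ K : Submodule R M, IsCompl N K := by
    intro N
    obtain ⟨e, hee, heN, hbot⟩ := key_idempotent hr hE N
    refine ⟨LinearMap.ker e, disjoint_iff.mpr hbot, codisjoint_iff.mpr ?_⟩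
    rw [eq_top_iff]
    intro x _
    have h1 : e x ∈ N := heN ⟨x, rfl⟩
    have h2 : x - e x ∈ LinearMap.ker e := by
      rw [LinearMap.mem_ker, map_sub]
      have : e (e x) = e x := by rw [← Module.End.mul_apply, hee.eq]
      rw [this]
      exact sub_self _
    exact Submodule.mem_sup.mpr ⟨e x, h1, x - e x, h2, by abel⟩
  have hss : IsSemisimpleModule R M := by
    haveI : ComplementedLattice (Submodule R M) := ⟨hcompl⟩
    exact ⟨⟩
  refine ⟨hss, ?_⟩
  -- Artinian: embed (antitone) submodules of M into left ideals of End R M.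
  set E := Module.End R M
  have hanti : ∀ {N N' : Submodule R M}, N < N' → killIdeal N' < killIdeal N := by
    intro N N' hlt
    obtain ⟨K, hK⟩ := hcompl N
    set π : Module.End R M := K.subtype.comp (K.linearProjOfIsCompl N hK.symm) with hπ
    have hkerπ : LinearMap.ker π = N := by
      rw [hπ, LinearMap.ker_comp, Submodule.ker_subtype, Submodule.comap_bot]
      exact Submodule.ker_projectionOnto _
    have hle : killIdeal N' ≤ killIdeal N := fun f hf => le_trans hlt.le hf
    refine lt_of_le_of_ne hle ?_
    intro h
    have hπN : π ∈ killIdeal N := le_of_eq hkerπ.symm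
    rw [← h] at hπN
    have : N' ≤ LinearMap.ker π := hπN
    rw [hkerπ] at this
    exact absurd (le_antisymm this hlt.le) hlt.ne'
  have hwf : WellFounded ((· > ·) : Ideal E → Ideal E → Prop) :=
    isNoetherian_iff.mp (inferInstance : IsNoetherian E E)
  refine ⟨Subrelation.wf (r := InvImage (· > ·) (killIdeal (R := R) (M := M))) ?_
    (InvImage.wf _ hwf)⟩
  intro N N' h
  exact hanti h
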